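/- arXiv:1505.07297 — 2 statements merged into one kernel-verified Lean document; each statement's English description precedes it below -/
import Mathlib

section
/- Let k be divisible by 3 and let C = x₁x₂…x_k be a cycle of length k. Let K₁ and K₂ be two cycles of length k in a graph G sharing at least one vertex, with K_i = v_{i,1}v_{i,2}…v_{i,k} labeled so that there is a homomorphism θ from K₁ ∪ K₂ to C with θ(v_{i,j}) = x_j for all i,j. If φ is a proper 3-coloring of K₁ ∪ K₂ such that φ has winding number k/3 on K₁ and on K₂ (with respect to these orientations), then φ(u) = φ(v) for all vertices u ∈ V(K₁), v ∈ V(K₂) with θ(u) = θ(v). -/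
/-- δ_ψ(u,v) = 1 if ψ(v)−ψ(u) ∈ {1,−2}, and −1 otherwise. -/
def delta {V : Type*} (ψ : V → ℤ) (u v : V) : ℤ :=
  if ψ v - ψ u = 1 ∨ ψ v - ψ u = -2 then 1 else -1

lemma delta_le_one {V : Type*} (ψ : V → ℤ) (u v : V) : delta ψ u v ≤ 1 := by
  unfold delta; split <;> omega

lemma all_one {k : ℕ} [NeZero k] (f : ZMod k → ℤ) (hle : ∀ j, f j ≤ 1)
    (hsum : ∑ j, f j = (k : ℤ)) : ∀ j, f j = 1 := by
  have hcard : (Finset.univ : Finset (ZMod k)).card = k := by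
    simp [ZMod.card]
  have h0 : ∑ j : ZMod k, (1 - f j) = 0 := by
    rw [Finset.sum_sub_distrib, hsum]; simp [hcard]
  have h := (Finset.sum_eq_zero_iff_of_nonneg
    (fun j _ => by have := hle j; omega)).mp h0
  intro j; have := h j (Finset.mem_univ j); omega

lemma cycle_cong {V : Type*} {k : ℕ} [NeZero k] (v : ZMod k → V) (φ : V → ℤ)
    (hstep : ∀ j, (3 : ℤ) ∣ (φ (v (j + 1)) - φ (v j) - 1)) :
    ∀ n : ℕ, ∀ j : ZMod k, (3 : ℤ) ∣ (φ (v (j + (n : ZMod k))) - φ (v j) - n) := by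
  intro n
  induction n with
  | zero => intro j; simp
  | succ n ih =>
    intro j
    have h1 := ih j
    have h2 := hstep (j + (n : ZMod k))
    have : j + ((n + 1 : ℕ) : ZMod k) = (j + (n : ZMod k)) + 1 := by
      push_cast; ring
    rw [this]
    push_cast
    omega

/-- Let 3 ∣ k, and let K₁, K₂ (vertices `v₁ j`, `v₂ j` for `j : ZMod k`, representing
v_{i,j}) be k-cycles in G sharing at least one vertex, labeled so that the map θ with
θ(v_{i,j}) = x_j (i.e. θ(vᵢ j) = j) is a homomorphism from K₁ ∪ K₂ to the k-cycle C.
If φ is a proper 3-coloring (of a graph containing K₁ ∪ K₂) with winding number k/3 on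
both K₁ and K₂ (i.e. δ_φ(Kᵢ) = k), then φ(u) = φ(v) whenever u ∈ V(K₁), v ∈ V(K₂) and
θ(u) = θ(v). -/
theorem stmt6 {V : Type*} (G : SimpleGraph V) (k : ℕ) [NeZero k] (hk3 : 3 ∣ k)
    (v₁ v₂ : ZMod k → V)
    (hinj₁ : Function.Injective v₁) (hinj₂ : Function.Injective v₂)
    (hadj₁ : ∀ j : ZMod k, G.Adj (v₁ j) (v₁ (j + 1)))
    (hadj₂ : ∀ j : ZMod k, G.Adj (v₂ j) (v₂ (j + 1)))
    (θ : V → ZMod k)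
    (hθ₁ : ∀ j, θ (v₁ j) = j) (hθ₂ : ∀ j, θ (v₂ j) = j)
    (hshare : ∃ a b, v₁ a = v₂ b)
    (φ : V → ℤ)
    (hcol : ∀ v, φ v ∈ ({1, 2, 3} : Set ℤ))
    (hprop : ∀ u v, G.Adj u v → φ u ≠ φ v)
    (hwind₁ : (∑ j : ZMod k, delta φ (v₁ j) (v₁ (j + 1))) = (k : ℤ))
    (hwind₂ : (∑ j : ZMod k, delta φ (v₂ j) (v₂ (j + 1))) = (k : ℤ)) :
    ∀ a b : ZMod k, θ (v₁ a) = θ (v₂ b) → φ (v₁ a) = φ (v₂ b) := by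
  -- all deltas are 1
  have hall₁ := all_one _ (fun j => delta_le_one φ (v₁ j) (v₁ (j + 1))) hwind₁
  have hall₂ := all_one _ (fun j => delta_le_one φ (v₂ j) (v₂ (j + 1))) hwind₂
  have hstep₁ : ∀ j, (3 : ℤ) ∣ (φ (v₁ (j + 1)) - φ (v₁ j) - 1) := by
    intro j
    have := hall₁ j
    unfold delta at this
    split at this
    · omega
    · omega
  have hstep₂ : ∀ j, (3 : ℤ) ∣ (φ (v₂ (j + 1)) - φ (v₂ j) - 1) := by
    intro j
    have := hall₂ j
    unfold delta at this
    split at this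
    · omega
    · omega
  have hc₁ := cycle_cong v₁ φ hstep₁
  have hc₂ := cycle_cong v₂ φ hstep₂
  have key₁ : ∀ a : ZMod k, (3 : ℤ) ∣ (φ (v₁ a) - φ (v₁ 0) - a.val) := by
    intro a
    have := hc₁ a.val 0
    simpa using this
  have key₂ : ∀ a : ZMod k, (3 : ℤ) ∣ (φ (v₂ a) - φ (v₂ 0) - a.val) := by
    intro a
    have := hc₂ a.val 0
    simpa using this
  obtain ⟨c, d, hcd⟩ := hshare
  have hcdeq : c = d := by
    have := congrArg θ hcd
    rwa [hθ₁, hθ₂] at this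
  subst hcdeq
  have hshared : (3 : ℤ) ∣ (φ (v₁ 0) - φ (v₂ 0)) := by
    have h1 := key₁ c
    have h2 := key₂ c
    rw [hcd] at h1
    omega
  intro a b hab
  rw [hθ₁, hθ₂] at hab
  subst hab
  have h1 := key₁ a
  have h2 := key₂ a
  obtain c1 := hcol (v₁ a)
  obtain c2 := hcol (v₂ a)
  simp only [Set.mem_insert_iff, Set.mem_singleton_iff] at c1 c2
  have b1 : 1 ≤ φ (v₁ a) ∧ φ (v₁ a) ≤ 3 := by rcases c1 with h | h | h <;> omega
  have b2 : 1 ≤ φ (v₂ a) ∧ φ (v₂ a) ≤ 3 := by rcases c2 with h | h | h <;> omega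
  omega
end

section
/- Let C be a cycle of length k and ψ, ψ′ two proper 3-colorings of C with the same winding number w, where k is divisible by 3 and |w| = k/3. Then ψ′ is obtained from ψ by adding a constant modulo 3: there exists α ∈ {0,1,2} such that ψ′(v) ≡ ψ(v) + α (mod 3) for all vertices v (colors identified with Z/3). In particular, if ψ and ψ′ agree on a single vertex, then ψ = ψ′. -/
/-- With colors identified with ℤ/3: δ_ψ(u,v) = 1 if ψ(v)−ψ(u) ≡ 1 (mod 3),
and −1 otherwise (for proper colorings, the nonzero difference is ±1 mod 3). -/
def deltaZ3 {V : Type*} (ψ : V → ZMod 3) (u v : V) : ℤ :=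
  if ψ v - ψ u = 1 then 1 else -1

lemma sum_pm_one_eq_card {α : Type*} [Fintype α] (f : α → ℤ)
    (hf : ∀ a, f a = 1 ∨ f a = -1)
    (h : ∑ a : α, f a = Fintype.card α) : ∀ a, f a = 1 := by
  have h0 : ∑ a : α, (1 - f a) = 0 := by
    rw [Finset.sum_sub_distrib, h]
    simp [Finset.card_univ]
  have := (Finset.sum_eq_zero_iff_of_nonneg (by
    intro a _
    rcases hf a with h1 | h1 <;> simp [h1])).1 h0
  intro a
  have := this a (Finset.mem_univ a)
  omega

/-- Let C be a cycle of length k with 3 ∣ k, and let ψ, ψ′ be proper 3-colorings of C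
(colors in ℤ/3) with the same winding number w, where |w| = k/3 (i.e. 3w = ±k).
Then ψ′ = ψ + α for a constant α ∈ ℤ/3; in particular, if ψ and ψ′ agree on a single
vertex then ψ = ψ′. -/
theorem stmt15 (k : ℕ) [NeZero k] (hk3 : 3 ∣ k)
    (ψ ψ' : ZMod k → ZMod 3)
    (hprop : ∀ i : ZMod k, ψ i ≠ ψ (i + 1))
    (hprop' : ∀ i : ZMod k, ψ' i ≠ ψ' (i + 1))
    (w : ℤ)
    (hw : (∑ i : ZMod k, deltaZ3 ψ i (i + 1)) = 3 * w)
    (hw' : (∑ i : ZMod k, deltaZ3 ψ' i (i + 1)) = 3 * w)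
    (habs : 3 * w = (k : ℤ) ∨ 3 * w = -(k : ℤ)) :
    (∃ α : ZMod 3, ∀ v : ZMod k, ψ' v = ψ v + α) ∧
      ((∃ v : ZMod k, ψ v = ψ' v) → ψ = ψ') := by
  have hpm : ∀ (φ : ZMod k → ZMod 3) (i : ZMod k),
      deltaZ3 φ i (i + 1) = 1 ∨ deltaZ3 φ i (i + 1) = -1 := by
    intro φ i
    unfold deltaZ3
    split <;> simp
  have hcard : (Fintype.card (ZMod k) : ℤ) = (k : ℤ) := by
    simp [ZMod.card]
  -- key: there's c with ∀ i, φ (i+1) = φ i + c, for φ = ψ and ψ'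
  have key : ∃ c : ZMod 3, (∀ i, ψ (i + 1) = ψ i + c) ∧ (∀ i, ψ' (i + 1) = ψ' i + c) := by
    rcases habs with hpos | hneg
    · refine ⟨1, ?_, ?_⟩ <;>
      · intro i
        first
        | (have h1 : deltaZ3 ψ i (i + 1) = 1 := by
             apply sum_pm_one_eq_card _ (hpm ψ)
             rw [hw, hpos, hcard]
           unfold deltaZ3 at h1
           by_cases hc : ψ (i + 1) - ψ i = 1
           · linear_combination hc
           · simp [hc] at h1)
        | (have h1 : deltaZ3 ψ' i (i + 1) = 1 := by
             apply sum_pm_one_eq_card _ (hpm ψ')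
             rw [hw', hpos, hcard]
           unfold deltaZ3 at h1
           by_cases hc : ψ' (i + 1) - ψ' i = 1
           · linear_combination hc
           · simp [hc] at h1)
    · refine ⟨2, ?_, ?_⟩ <;>
      · intro i
        first
        | (have h1 : deltaZ3 ψ i (i + 1) = -1 := by
             have := sum_pm_one_eq_card (fun i => -deltaZ3 ψ i (i + 1))
               (by intro a; rcases hpm ψ a with h | h <;> simp [h])
               (by rw [Finset.sum_neg_distrib, hw, hneg, hcard]; ring) i
             omega
           have hne : ψ (i + 1) - ψ i ≠ 1 := by
             intro hc; unfold deltaZ3 at h1; simp [hc] at h1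
           have hne0 : ψ (i + 1) - ψ i ≠ 0 := by
             intro hc
             exact hprop i (by linear_combination -hc)
           have h2 : ψ (i + 1) - ψ i = 2 := by
             revert hne hne0; generalize ψ (i + 1) - ψ i = x; revert x; decide
           linear_combination h2)
        | (have h1 : deltaZ3 ψ' i (i + 1) = -1 := by
             have := sum_pm_one_eq_card (fun i => -deltaZ3 ψ' i (i + 1))
               (by intro a; rcases hpm ψ' a with h | h <;> simp [h])
               (by rw [Finset.sum_neg_distrib, hw', hneg, hcard]; ring) i
             omega
           have hne : ψ' (i + 1) - ψ' i ≠ 1 := by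
             intro hc; unfold deltaZ3 at h1; simp [hc] at h1
           have hne0 : ψ' (i + 1) - ψ' i ≠ 0 := by
             intro hc
             exact hprop' i (by linear_combination -hc)
           have h2 : ψ' (i + 1) - ψ' i = 2 := by
             revert hne hne0; generalize ψ' (i + 1) - ψ' i = x; revert x; decide
           linear_combination h2)
  obtain ⟨c, hψc, hψ'c⟩ := key
  -- difference is constant
  have hconst : ∀ v : ZMod k, ψ' v - ψ v = ψ' 0 - ψ 0 := by
    have hnat : ∀ n : ℕ, ψ' (n : ZMod k) - ψ (n : ZMod k) = ψ' 0 - ψ 0 := by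
      intro n
      induction n with
      | zero => simp
      | succ m ih =>
        push_cast
        rw [hψc, hψ'c]
        linear_combination ih
    intro v
    obtain ⟨n, rfl⟩ := ZMod.natCast_zmod_surjective (n := k) v
    exact hnat n
  constructor
  · exact ⟨ψ' 0 - ψ 0, fun v => by linear_combination hconst v⟩
  · rintro ⟨v, hv⟩
    funext u
    have h1 := hconst v
    have h2 := hconst u
    rw [hv] at h1
    linear_combination h1 - h2
end
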